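/- Suppose the sequences (uⁿ), (gⁿ), (qⁿ) generated by the primal-dual algorithm are bounded, and additionally ‖uⁿ⁺¹ - uⁿ‖ → 0 and ‖qⁿ⁺¹ - qⁿ‖ → 0. Then every accumulation point (û, ĝ, q̂) of the sequence satisfies Kû = ĝ, -Kᵀq̂ ∈ ∂G(û), and q̂ ∈ ∂F(ĝ); consequently 0 ∈ Kᵀ∂F(Kû) + ∂G(û), i.e. û is a critical point of G(u) + F(Ku). -/

import Mathlib

open Filter Topology

/-- The regular (Fréchet) subdifferential of `E` at `g`. -/
noncomputable def regSubdiff {X : Type*} [NormedAddCommGroup X] [InnerProductSpace ℝ X]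
    (E : X → ℝ) (g : X) : Set X :=
  {ξ | 0 ≤ Filter.liminf
    (fun ρ => (E ρ - E g - (inner ℝ ξ (ρ - g) : ℝ)) / ‖ρ - g‖) (nhdsWithin g {g}ᶜ)}

lemma liminf_nonneg_of_eventually {α : Type*} {f : Filter α} {u : α → ℝ}
    (h : ∀ ε : ℝ, 0 < ε → ∀ᶠ x in f, -ε ≤ u x) : 0 ≤ Filter.liminf u f := by
  rw [Filter.liminf_eq]
  set S := {a : ℝ | ∀ᶠ x in f, a ≤ u x} with hS
  by_cases hb : BddAbove S
  · by_contra hneg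
    push_neg at hneg
    have h1 : -(-(sSup S) / 2) ≤ sSup S :=
      le_csSup hb (h (-(sSup S) / 2) (by linarith))
    linarith
  · simp [Real.sSup_of_not_bddAbove hb]

lemma eventually_le_of_liminf_nonneg {α : Type*} {f : Filter α} {u : α → ℝ}
    (hb : ∃ a : ℝ, ∀ᶠ x in f, a ≤ u x) (h : 0 ≤ Filter.liminf u f)
    {ε : ℝ} (hε : 0 < ε) : ∀ᶠ x in f, -ε ≤ u x := by
  rw [Filter.liminf_eq] at h
  set S := {a : ℝ | ∀ᶠ x in f, a ≤ u x} with hS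
  obtain ⟨a, ha⟩ := hb
  by_cases hBdd : BddAbove S
  · obtain ⟨b, hbS, hbε⟩ := exists_lt_of_lt_csSup (⟨a, ha⟩ : S.Nonempty)
      (lt_of_lt_of_le (by linarith : (-ε : ℝ) < 0) h)
    exact hbS.mono fun x hx => hbε.le.trans hx
  · obtain ⟨b, hbS, hbε⟩ := not_bddAbove_iff.1 hBdd (-ε)
    exact hbS.mono fun x hx => hbε.le.trans hx

lemma mem_regSubdiff_of_forall {X : Type*} [NormedAddCommGroup X] [InnerProductSpace ℝ X]
    {E : X → ℝ} {g ξ : X} {c : ℝ}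
    (h : ∀ ρ, E g + (inner ℝ ξ (ρ - g) : ℝ) - c / 2 * ‖ρ - g‖ ^ 2 ≤ E ρ) :
    ξ ∈ regSubdiff E g := by
  apply liminf_nonneg_of_eventually
  intro ε hε
  have hball : ∀ᶠ ρ in nhdsWithin g {g}ᶜ, dist ρ g < 2 * ε / (|c| + 1) := by
    apply eventually_nhdsWithin_of_eventually_nhds
    exact Metric.eventually_nhds_iff_ball.2 ⟨2 * ε / (|c| + 1),
      by positivity, fun y hy => by simpa [Metric.mem_ball] using hy⟩
  filter_upwards [hball, self_mem_nhdsWithin] with ρ hρ hρne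
  have hne : ρ ≠ g := hρne
  have hd : 0 < ‖ρ - g‖ := by
    simpa [norm_pos_iff, sub_eq_zero] using hne
  have key : -(c / 2 * ‖ρ - g‖ ^ 2) ≤ E ρ - E g - (inner ℝ ξ (ρ - g) : ℝ) := by
    have := h ρ; linarith
  have hq : -(|c| / 2 * ‖ρ - g‖) ≤ (E ρ - E g - (inner ℝ ξ (ρ - g) : ℝ)) / ‖ρ - g‖ := by
    rw [le_div_iff₀ hd]
    calc -(|c| / 2 * ‖ρ - g‖) * ‖ρ - g‖ = -(|c| / 2 * ‖ρ - g‖ ^ 2) := by ring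
    _ ≤ -(c / 2 * ‖ρ - g‖ ^ 2) := by
        have : c / 2 * ‖ρ - g‖ ^ 2 ≤ |c| / 2 * ‖ρ - g‖ ^ 2 := by
          have := le_abs_self c
          nlinarith [sq_nonneg ‖ρ - g‖]
        linarith
    _ ≤ E ρ - E g - (inner ℝ ξ (ρ - g) : ℝ) := key
  have hsmall : |c| / 2 * ‖ρ - g‖ ≤ ε := by
    have hdg : ‖ρ - g‖ < 2 * ε / (|c| + 1) := by
      rwa [dist_eq_norm] at hρ
    have h1 : 0 < |c| + 1 := by positivity
    rw [lt_div_iff₀ h1] at hdg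
    nlinarith [abs_nonneg c, norm_nonneg (ρ - g)]
  linarith

lemma forall_of_mem_regSubdiff {X : Type*} [NormedAddCommGroup X] [InnerProductSpace ℝ X]
    [FiniteDimensional ℝ X] {E : X → ℝ} {c : ℝ}
    (hconv : ConvexOn ℝ Set.univ (fun x => E x + c / 2 * ‖x‖ ^ 2))
    {g ξ : X} (h : ξ ∈ regSubdiff E g) :
    ∀ ρ, E g + (inner ℝ ξ (ρ - g) : ℝ) - c / 2 * ‖ρ - g‖ ^ 2 ≤ E ρ := by
  set H : X → ℝ := fun x => E x + c / 2 * ‖x‖ ^ 2 with hH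
  set η : X := ξ + c • g with hη
  have hid : ∀ ρ : X, H ρ - H g - (inner ℝ η (ρ - g) : ℝ)
      = (E ρ - E g - (inner ℝ ξ (ρ - g) : ℝ)) + c / 2 * ‖ρ - g‖ ^ 2 := by
    intro ρ
    have h1 : (inner ℝ η (ρ - g) : ℝ) = (inner ℝ ξ (ρ - g) : ℝ) + c * (inner ℝ g (ρ - g) : ℝ) := by
      rw [hη, inner_add_left, real_inner_smul_left]
    have h2 : ‖ρ - g‖ ^ 2 = ‖ρ‖ ^ 2 - 2 * (inner ℝ ρ g : ℝ) + ‖g‖ ^ 2 := norm_sub_sq_real ρ g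
    have h3 : (inner ℝ g (ρ - g) : ℝ) = (inner ℝ g ρ : ℝ) - (inner ℝ g g : ℝ) := inner_sub_right g ρ g
    have h4 : (inner ℝ g g : ℝ) = ‖g‖ ^ 2 := real_inner_self_eq_norm_sq g
    have h5 : (inner ℝ g ρ : ℝ) = (inner ℝ ρ g : ℝ) := real_inner_comm ρ g
    simp only [hH]
    rw [h1, h3, h4, h5]
    linear_combination (-(c / 2)) * h2
  clear_value H η
  -- local Lipschitz bound for H near g
  obtain ⟨L, t, ht, hLip⟩ := hconv.locallyLipschitz g
  -- lower bound for the difference quotient of E near g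
  have hb : ∃ a : ℝ, ∀ᶠ ρ in nhdsWithin g {g}ᶜ,
      a ≤ (E ρ - E g - (inner ℝ ξ (ρ - g) : ℝ)) / ‖ρ - g‖ := by
    refine ⟨-((L : ℝ) + ‖η‖ + |c| / 2), ?_⟩
    have h1 : ∀ᶠ ρ in nhdsWithin g {g}ᶜ, ρ ∈ t :=
      eventually_nhdsWithin_of_eventually_nhds ht
    have h2 : ∀ᶠ ρ in nhdsWithin g {g}ᶜ, dist ρ g < 1 := by
      apply eventually_nhdsWithin_of_eventually_nhds
      exact Metric.eventually_nhds_iff_ball.2 ⟨1, one_pos,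
        fun y hy => by simpa [Metric.mem_ball] using hy⟩
    filter_upwards [h1, h2, self_mem_nhdsWithin] with ρ hρt hρ1 hρne
    have hd : 0 < ‖ρ - g‖ := by
      simpa [norm_pos_iff, sub_eq_zero] using (hρne : ρ ≠ g)
    have hd1 : ‖ρ - g‖ ≤ 1 := by
      rw [dist_eq_norm] at hρ1; linarith
    have hLb : |H ρ - H g| ≤ (L : ℝ) * ‖ρ - g‖ := by
      have := hLip.dist_le_mul ρ hρt g (mem_of_mem_nhds ht)
      rwa [Real.dist_eq, dist_eq_norm] at this
    have hip : |(inner ℝ η (ρ - g) : ℝ)| ≤ ‖η‖ * ‖ρ - g‖ := abs_real_inner_le_norm η (ρ - g)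
    have hnum : -(((L : ℝ) + ‖η‖ + |c| / 2) * ‖ρ - g‖) ≤ E ρ - E g - (inner ℝ ξ (ρ - g) : ℝ) := by
      have hE : E ρ - E g - (inner ℝ ξ (ρ - g) : ℝ)
          = (H ρ - H g - (inner ℝ η (ρ - g) : ℝ)) - c / 2 * ‖ρ - g‖ ^ 2 := by
        have := hid ρ; linarith
      rw [hE]
      have hc : c / 2 * ‖ρ - g‖ ^ 2 ≤ |c| / 2 * ‖ρ - g‖ := by
        have h6 : c ≤ |c| := le_abs_self c
        have h9 : ‖ρ - g‖ ^ 2 ≤ ‖ρ - g‖ := by nlinarith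
        nlinarith [abs_nonneg c, sq_nonneg ‖ρ - g‖]
      obtain ⟨h7a, h7b⟩ := abs_le.1 hLb
      obtain ⟨h8a, h8b⟩ := abs_le.1 hip
      linarith
    rw [le_div_iff₀ hd]
    calc -((L : ℝ) + ‖η‖ + |c| / 2) * ‖ρ - g‖ = -(((L : ℝ) + ‖η‖ + |c| / 2) * ‖ρ - g‖) := by ring
    _ ≤ _ := hnum
  -- main argument
  intro ρ₀
  by_cases hρ₀ : ρ₀ = g
  · simp [hρ₀]
  have hd₀ : 0 < ‖ρ₀ - g‖ := by simpa [norm_pos_iff, sub_eq_zero] using hρ₀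
  suffices hD : 0 ≤ H ρ₀ - H g - (inner ℝ η (ρ₀ - g) : ℝ) by
    rw [hid ρ₀] at hD; linarith
  by_contra hDneg
  push_neg at hDneg
  set D : ℝ := H ρ₀ - H g - (inner ℝ η (ρ₀ - g) : ℝ) with hDdef
  set δ : ℝ := -D / ‖ρ₀ - g‖ with hδdef
  have hδ : 0 < δ := by
    apply div_pos (by linarith) hd₀
  have hS1 : ∀ᶠ ρ in nhdsWithin g {g}ᶜ,
      -(δ/4) ≤ (E ρ - E g - (inner ℝ ξ (ρ - g) : ℝ)) / ‖ρ - g‖ :=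
    eventually_le_of_liminf_nonneg hb h (by linarith)
  have hS2 : ∀ᶠ ρ in nhdsWithin g {g}ᶜ, dist ρ g < δ / (2 * (|c| + 1)) := by
    apply eventually_nhdsWithin_of_eventually_nhds
    exact Metric.eventually_nhds_iff_ball.2 ⟨δ / (2 * (|c| + 1)),
      by positivity, fun y hy => by simpa [Metric.mem_ball] using hy⟩
  have hQH : ∀ᶠ ρ in nhdsWithin g {g}ᶜ,
      -(δ/2) ≤ (H ρ - H g - (inner ℝ η (ρ - g) : ℝ)) / ‖ρ - g‖ := by
    filter_upwards [hS1, hS2, self_mem_nhdsWithin] with ρ h1 h2 hρne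
    have hd : 0 < ‖ρ - g‖ := by simpa [norm_pos_iff, sub_eq_zero] using (hρne : ρ ≠ g)
    have hsplit : (H ρ - H g - (inner ℝ η (ρ - g) : ℝ)) / ‖ρ - g‖
        = (E ρ - E g - (inner ℝ ξ (ρ - g) : ℝ)) / ‖ρ - g‖ + c / 2 * ‖ρ - g‖ := by
      rw [hid ρ]
      field_simp
    rw [hsplit]
    have hdsmall : ‖ρ - g‖ < δ / (2 * (|c| + 1)) := by rwa [dist_eq_norm] at h2
    have habs : |c / 2 * ‖ρ - g‖| ≤ δ / 4 := by
      have h0 : (0:ℝ) < 2 * (|c| + 1) := by positivity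
      have hq0 : (0:ℝ) ≤ δ / (2 * (|c| + 1)) := by positivity
      have hq : δ / (2 * (|c| + 1)) * (2 * (|c| + 1)) = δ := div_mul_cancel₀ δ (ne_of_gt h0)
      rw [abs_mul, abs_div, abs_two, abs_of_nonneg (norm_nonneg _)]
      nlinarith [abs_nonneg c, hdsmall, norm_nonneg (ρ - g), hq, hq0]
    have := abs_le.1 habs
    linarith
  rw [Filter.Eventually, Metric.mem_nhdsWithin_iff] at hQH
  obtain ⟨r, hr, hsub⟩ := hQH
  set s : ℝ := min 1 (r / (2 * ‖ρ₀ - g‖)) with hsdef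
  have hs0 : 0 < s := lt_min one_pos (by positivity)
  have hs1 : s ≤ 1 := min_le_left _ _
  set ρs : X := g + s • (ρ₀ - g) with hρs
  have hρsd : ρs - g = s • (ρ₀ - g) := by rw [hρs]; abel
  have hρsnorm : ‖ρs - g‖ = s * ‖ρ₀ - g‖ := by
    rw [hρsd, norm_smul, Real.norm_eq_abs, abs_of_pos hs0]
  have hρsball : ρs ∈ Metric.ball g r := by
    rw [Metric.mem_ball, dist_eq_norm, hρsnorm]
    have : s ≤ r / (2 * ‖ρ₀ - g‖) := min_le_right _ _
    have h4 : s * ‖ρ₀ - g‖ ≤ r / (2 * ‖ρ₀ - g‖) * ‖ρ₀ - g‖ :=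
      mul_le_mul_of_nonneg_right this (norm_nonneg _)
    have h5 : r / (2 * ‖ρ₀ - g‖) * ‖ρ₀ - g‖ = r / 2 := by field_simp
    linarith
  have hρsne : ρs ∈ ({g}ᶜ : Set X) := by
    simp only [Set.mem_compl_iff, Set.mem_singleton_iff]
    intro hcon
    have : ‖ρs - g‖ = 0 := by rw [hcon]; simp
    rw [hρsnorm] at this
    nlinarith
  have hmem := hsub ⟨hρsball, hρsne⟩
  have hconvpt : H ρs ≤ (1 - s) * H g + s * H ρ₀ := by
    have := hconv.2 (Set.mem_univ g) (Set.mem_univ ρ₀)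
      (by linarith : (0:ℝ) ≤ 1 - s) hs0.le (by ring)
    have heq : (1 - s) • g + s • ρ₀ = ρs := by
      rw [hρs]; module
    rw [heq] at this
    simpa using this
  have hinner : (inner ℝ η (ρs - g) : ℝ) = s * (inner ℝ η (ρ₀ - g) : ℝ) := by
    rw [hρsd, real_inner_smul_right]
  have hQle : (H ρs - H g - (inner ℝ η (ρs - g) : ℝ)) / ‖ρs - g‖ ≤ -δ := by
    rw [hρsnorm, hinner]
    have hnum : H ρs - H g - s * (inner ℝ η (ρ₀ - g) : ℝ) ≤ s * D := by
      rw [hDdef]; nlinarith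
    rw [div_le_iff₀ (by positivity)]
    calc H ρs - H g - s * (inner ℝ η (ρ₀ - g) : ℝ) ≤ s * D := hnum
    _ = -δ * (s * ‖ρ₀ - g‖) := by
        rw [hδdef]; field_simp
  have hge : -(δ/2) ≤ (H ρs - H g - (inner ℝ η (ρs - g) : ℝ)) / ‖ρs - g‖ := hmem
  linarith

lemma limit_subdiff {X : Type*} [NormedAddCommGroup X] [InnerProductSpace ℝ X]
    {E : X → ℝ} (hE : LowerSemicontinuous E) {c : ℝ}
    {x ξ : ℕ → X} {xh ξh : X}
    (hx : Filter.Tendsto x Filter.atTop (nhds xh))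
    (hξ : Filter.Tendsto ξ Filter.atTop (nhds ξh))
    (h : ∀ n ρ, E (x n) + (inner ℝ (ξ n) (ρ - x n) : ℝ) - c / 2 * ‖ρ - x n‖ ^ 2 ≤ E ρ) :
    ∀ ρ, E xh + (inner ℝ ξh (ρ - xh) : ℝ) - c / 2 * ‖ρ - xh‖ ^ 2 ≤ E ρ := by
  intro ρ
  have hcont : Filter.Tendsto (fun n => (inner ℝ (ξ n) (ρ - x n) : ℝ) - c / 2 * ‖ρ - x n‖ ^ 2)
      Filter.atTop (nhds ((inner ℝ ξh (ρ - xh) : ℝ) - c / 2 * ‖ρ - xh‖ ^ 2)) := by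
    have h1 : Filter.Tendsto (fun n => ρ - x n) Filter.atTop (nhds (ρ - xh)) :=
      tendsto_const_nhds.sub hx
    exact (hξ.inner h1).sub (((h1.norm.pow 2)).const_mul (c / 2))
  refine le_of_forall_pos_le_add fun ε hε => ?_
  have hlsc : ∀ᶠ n in Filter.atTop, E xh - ε / 2 < E (x n) :=
    hx.eventually (hE xh (E xh - ε / 2) (by linarith))
  have hcl : ∀ᶠ n in Filter.atTop,
      (inner ℝ ξh (ρ - xh) : ℝ) - c / 2 * ‖ρ - xh‖ ^ 2 - ε / 2
        < (inner ℝ (ξ n) (ρ - x n) : ℝ) - c / 2 * ‖ρ - x n‖ ^ 2 :=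
    hcont.eventually (eventually_gt_nhds (by linarith))
  obtain ⟨n, h1, h2⟩ := (hlsc.and hcl).exists
  have := h n ρ
  linarith

/-- If the PDHG sequences are bounded and successive differences of `uⁿ` and `qⁿ` vanish,
then every accumulation point `(û, ĝ, q̂)` satisfies `Kû = ĝ`, `-Kᵀq̂ ∈ ∂G(û)`,
`q̂ ∈ ∂F(ĝ)`, and hence `0 ∈ Kᵀ∂F(Kû) + ∂G(û)`, i.e. `û` is a critical point of
`G(u) + F(Ku)`. -/
theorem pdhg_subsequential_convergence_to_critical_points
    {X Y : Type*} [NormedAddCommGroup X] [InnerProductSpace ℝ X] [FiniteDimensional ℝ X]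
    [NormedAddCommGroup Y] [InnerProductSpace ℝ Y] [FiniteDimensional ℝ Y]
    (K : X →L[ℝ] Y) (F : Y → ℝ) (G : X → ℝ) (ω σ τ θ : ℝ)
    (hF_lsc : LowerSemicontinuous F)
    (hF_semiconvex : ConvexOn ℝ Set.univ (fun g => F g + ω / 2 * ‖g‖ ^ 2))
    (hG_lsc : LowerSemicontinuous G) (hG_convex : ConvexOn ℝ Set.univ G)
    (hσω : σ > ω) (hτ : 0 < τ) (hσ : 0 < σ) (hθ0 : 0 ≤ θ) (hθ1 : θ ≤ 1)
    (u : ℕ → X) (g q : ℕ → Y) (ubar : ℕ → X)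
    (hubar0 : ubar 0 = u 0)
    (hoptF : ∀ n, q n - σ • (g (n + 1) - K (ubar n)) ∈ regSubdiff F (g (n + 1)))
    (hq : ∀ n, q (n + 1) = q n + σ • (K (ubar n) - g (n + 1)))
    (hoptG : ∀ n, -(τ⁻¹ • (u (n + 1) - u n)) - (ContinuousLinearMap.adjoint K) (q (n + 1))
      ∈ regSubdiff G (u (n + 1)))
    (hubar : ∀ n, ubar (n + 1) = u (n + 1) + θ • (u (n + 1) - u n))
    (hbdd_u : ∃ M, ∀ n, ‖u n‖ ≤ M) (hbdd_g : ∃ M, ∀ n, ‖g n‖ ≤ M)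
    (hbdd_q : ∃ M, ∀ n, ‖q n‖ ≤ M)
    (hdu : Filter.Tendsto (fun n => ‖u (n + 1) - u n‖) Filter.atTop (nhds 0))
    (hdq : Filter.Tendsto (fun n => ‖q (n + 1) - q n‖) Filter.atTop (nhds 0)) :
    ∀ (φ : ℕ → ℕ), StrictMono φ → ∀ (uhat : X) (ghat qhat : Y),
      Filter.Tendsto (u ∘ φ) Filter.atTop (nhds uhat) →
      Filter.Tendsto (g ∘ φ) Filter.atTop (nhds ghat) →
      Filter.Tendsto (q ∘ φ) Filter.atTop (nhds qhat) →
      K uhat = ghat ∧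
      -(ContinuousLinearMap.adjoint K) qhat ∈ regSubdiff G uhat ∧
      qhat ∈ regSubdiff F ghat ∧
      (∃ p ∈ regSubdiff F (K uhat), ∃ r ∈ regSubdiff G uhat,
        (ContinuousLinearMap.adjoint K) p + r = 0) := by
  intro φ hφ uhat ghat qhat hu hg' hq'
  have hσne : σ ≠ 0 := ne_of_gt hσ
  have hdu' : Filter.Tendsto (fun n => u (n + 1) - u n) Filter.atTop (nhds 0) :=
    tendsto_zero_iff_norm_tendsto_zero.2 hdu
  have hdq' : Filter.Tendsto (fun n => q (n + 1) - q n) Filter.atTop (nhds 0) :=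
    tendsto_zero_iff_norm_tendsto_zero.2 hdq
  -- K ubar n - g (n+1) → 0
  have hKg : Filter.Tendsto (fun n => K (ubar n) - g (n + 1)) Filter.atTop (nhds 0) := by
    have h1 : Filter.Tendsto (fun n => σ⁻¹ • (q (n + 1) - q n)) Filter.atTop
        (nhds (σ⁻¹ • (0 : Y))) := hdq'.const_smul σ⁻¹
    rw [smul_zero] at h1
    refine h1.congr fun n => ?_
    rw [hq n]
    rw [add_sub_cancel_left, smul_smul, inv_mul_cancel₀ hσne, one_smul]
  -- ubar n - u n → 0
  have hbar : Filter.Tendsto (fun n => ubar n - u n) Filter.atTop (nhds 0) := by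
    have h2 : Filter.Tendsto (fun n => θ • (u (n + 1) - u n)) Filter.atTop
        (nhds (θ • (0 : X))) := hdu'.const_smul θ
    rw [smul_zero] at h2
    have h1 : Filter.Tendsto (fun n => ubar (n + 1) - u (n + 1)) Filter.atTop (nhds 0) := by
      refine h2.congr fun n => ?_
      rw [hubar n]; abel
    exact (Filter.tendsto_add_atTop_iff_nat 1).1 h1
  have hKbar : Filter.Tendsto (fun n => K (ubar n) - K (u n)) Filter.atTop (nhds 0) := by
    have h1 := (K.continuous.tendsto 0).comp hbar
    rw [map_zero] at h1
    exact h1.congr fun n => by simp only [Function.comp_apply, map_sub]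
  have hgu : Filter.Tendsto (fun n => g (n + 1) - K (u n)) Filter.atTop (nhds 0) := by
    have h1 := hKbar.sub hKg
    rw [sub_zero] at h1
    exact h1.congr fun n => by abel
  have hgu1 : Filter.Tendsto (fun n => g n - K (u n)) Filter.atTop (nhds 0) := by
    have hKdu : Filter.Tendsto (fun n => K (u (n + 1)) - K (u n)) Filter.atTop (nhds 0) := by
      have h1 := (K.continuous.tendsto 0).comp hdu'
      rw [map_zero] at h1
      exact h1.congr fun n => by simp only [Function.comp_apply, map_sub]
    have h1 : Filter.Tendsto (fun n => g (n + 1) - K (u (n + 1))) Filter.atTop (nhds 0) := by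
      have h2 := hgu.sub hKdu
      rw [sub_zero] at h2
      exact h2.congr fun n => by abel
    exact (Filter.tendsto_add_atTop_iff_nat 1).1 h1
  have hφt : Filter.Tendsto φ Filter.atTop Filter.atTop := hφ.tendsto_atTop
  have hu1 : Filter.Tendsto (fun n => u (φ n + 1)) Filter.atTop (nhds uhat) := by
    have h1 := hu.add (hdu'.comp hφt)
    rw [add_zero] at h1
    exact h1.congr fun n => by simp only [Function.comp_apply]; abel
  have hq1 : Filter.Tendsto (fun n => q (φ n + 1)) Filter.atTop (nhds qhat) := by
    have h1 := hq'.add (hdq'.comp hφt)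
    rw [add_zero] at h1
    exact h1.congr fun n => by simp only [Function.comp_apply]; abel
  have hg1 : Filter.Tendsto (fun n => g (φ n + 1)) Filter.atTop (nhds (K uhat)) := by
    have h1 := (hgu.comp hφt).add ((K.continuous.tendsto uhat).comp hu)
    rw [zero_add] at h1
    exact h1.congr fun n => by simp only [Function.comp_apply]; abel
  have hKghat : K uhat = ghat := by
    have h1 : Filter.Tendsto (fun n => g (φ n) - K (u (φ n))) Filter.atTop (nhds 0) :=
      (hgu1.comp hφt).congr fun n => by simp only [Function.comp_apply]
    have h2 : Filter.Tendsto (fun n => g (φ n) - K (u (φ n))) Filter.atTop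
        (nhds (ghat - K uhat)) :=
      (hg'.sub ((K.continuous.tendsto uhat).comp hu)).congr fun n => by
        simp only [Function.comp_apply]
    have h3 := tendsto_nhds_unique h1 h2
    have h4 : ghat - K uhat = 0 := h3.symm
    rw [sub_eq_zero] at h4
    exact h4.symm
  -- q (n+1) ∈ ∂F (g (n+1))
  have hqF : ∀ n, q (n + 1) ∈ regSubdiff F (g (n + 1)) := by
    intro n
    have h1 := hoptF n
    have h2 : q n - σ • (g (n + 1) - K (ubar n)) = q (n + 1) := by
      rw [hq n, smul_sub, smul_sub]; abel
    rwa [h2] at h1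
  have hFineq : ∀ n ρ, F (g (n + 1)) + (inner ℝ (q (n + 1)) (ρ - g (n + 1)) : ℝ)
      - ω / 2 * ‖ρ - g (n + 1)‖ ^ 2 ≤ F ρ :=
    fun n => forall_of_mem_regSubdiff hF_semiconvex (hqF n)
  have hFhat : ∀ ρ, F (K uhat) + (inner ℝ qhat (ρ - K uhat) : ℝ)
      - ω / 2 * ‖ρ - K uhat‖ ^ 2 ≤ F ρ :=
    limit_subdiff hF_lsc hg1 hq1 (fun n ρ => hFineq (φ n) ρ)
  -- G part
  have hGconv0 : ConvexOn ℝ Set.univ (fun x : X => G x + (0 : ℝ) / 2 * ‖x‖ ^ 2) := by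
    simpa using hG_convex
  have hGineq : ∀ n ρ, G (u (n + 1))
      + (inner ℝ (-(τ⁻¹ • (u (n + 1) - u n)) - (ContinuousLinearMap.adjoint K) (q (n + 1)))
          (ρ - u (n + 1)) : ℝ)
      - (0 : ℝ) / 2 * ‖ρ - u (n + 1)‖ ^ 2 ≤ G ρ :=
    fun n => forall_of_mem_regSubdiff hGconv0 (hoptG n)
  have hξG : Filter.Tendsto
      (fun n => -(τ⁻¹ • (u (φ n + 1) - u (φ n)))
        - (ContinuousLinearMap.adjoint K) (q (φ n + 1))) Filter.atTop
      (nhds (-(ContinuousLinearMap.adjoint K) qhat)) := by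
    have h1 : Filter.Tendsto (fun n => τ⁻¹ • (u (φ n + 1) - u (φ n))) Filter.atTop
        (nhds (τ⁻¹ • (0 : X))) := (hdu'.comp hφt).const_smul τ⁻¹
    rw [smul_zero] at h1
    have h2 := ((ContinuousLinearMap.adjoint K).continuous.tendsto qhat).comp hq1
    have h3 := h1.neg.sub h2
    rw [neg_zero, zero_sub] at h3
    exact h3.congr fun n => by simp only [Function.comp_apply]
  have hGhat : ∀ ρ, G uhat + (inner ℝ (-(ContinuousLinearMap.adjoint K) qhat) (ρ - uhat) : ℝ)
      - (0 : ℝ) / 2 * ‖ρ - uhat‖ ^ 2 ≤ G ρ :=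
    limit_subdiff hG_lsc hu1 hξG (fun n ρ => hGineq (φ n) ρ)
  have m1 : -(ContinuousLinearMap.adjoint K) qhat ∈ regSubdiff G uhat :=
    mem_regSubdiff_of_forall hGhat
  have m2 : qhat ∈ regSubdiff F (K uhat) :=
    mem_regSubdiff_of_forall hFhat
  refine ⟨hKghat, m1, hKghat ▸ m2, qhat, m2, -(ContinuousLinearMap.adjoint K) qhat, m1, ?_⟩
  abel
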